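/- Let I be an ideal on ℕ. Then the following are equivalent: (1) for every sequence (a_n) of nonnegative reals with ∑ a_n < ∞, there exists F in the dual filter I* such that (n·a_n)_{n∈F} converges to 0; (2) the summable ideal I_{1/n} is contained in I. -/

import Mathlib

open Filter Set

/-- For an ideal `I` on `ℕ`: every convergent series of nonnegative reals has
`(n * a n)` `I^*`-convergent to `0` iff `I` extends the summable ideal `I_{1/n}`. -/
theorem salat_toma_star (I : Set (Set ℕ))
    (hfin : ∀ A : Set ℕ, A.Finite → A ∈ I)
    (hsub : ∀ A B : Set ℕ, A ⊆ B → B ∈ I → A ∈ I)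
    (hunion : ∀ A B : Set ℕ, A ∈ I → B ∈ I → A ∪ B ∈ I)
    (huniv : (Set.univ : Set ℕ) ∉ I) :
    (∀ a : ℕ → ℝ, (∀ n, 0 ≤ a n) → Summable a →
      ∃ F : Set ℕ, Fᶜ ∈ I ∧
        ∀ ε > (0 : ℝ), ∃ k : ℕ, ∀ n ∈ F, k ≤ n → |(n : ℝ) * a n| < ε) ↔
    (∀ A : Set ℕ, Summable (A.indicator fun n : ℕ => 1 / (n : ℝ)) → A ∈ I) := by
  constructor
  · -- forward direction
    intro h A hA
    have ha : ∀ n, 0 ≤ A.indicator (fun n : ℕ => 1 / (n : ℝ)) n := by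
      intro n
      exact Set.indicator_nonneg (fun n _ => by positivity) n
    obtain ⟨F, hFc, hconv⟩ := h _ ha hA
    obtain ⟨k, hk⟩ := hconv (1/2) (by norm_num)
    have hAsub : A ⊆ Fᶜ ∪ Set.Iio (max k 1) := by
      intro n hnA
      by_contra hcon
      simp only [Set.mem_union, Set.mem_compl_iff, Set.mem_Iio, not_or, not_not,
        not_lt, max_le_iff] at hcon
      obtain ⟨hF, hkn, hn1⟩ := hcon
      have h1 := hk n hF hkn
      have hne : (n : ℝ) ≠ 0 := by positivity
      rw [Set.indicator_of_mem hnA] at h1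
      rw [mul_one_div, div_self hne] at h1
      norm_num at h1
    exact hsub _ _ hAsub (hunion _ _ hFc (hfin _ (Set.finite_Iio _)))
  · -- reverse direction
    intro h a ha hsum
    set F0 : ℕ → ENNReal := fun n => ENNReal.ofReal (1 / (n : ℝ)) with hF0
    set A : ℕ → Set ℕ := fun k => {n : ℕ | 1 / ((k : ℝ) + 1) ≤ (n : ℝ) * a n} with hAdef
    -- each A k has summable reciprocals (in ENNReal form)
    have hAsum : ∀ k : ℕ, ∑' n, (A k).indicator F0 n ≠ ⊤ := by
      intro k
      have hb : ∀ n, (A k).indicator F0 n ≤ ENNReal.ofReal (((k : ℝ) + 1) * a n) := by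
        intro n
        by_cases hn : n ∈ A k
        · rw [Set.indicator_of_mem hn]
          apply ENNReal.ofReal_le_ofReal
          rcases Nat.eq_zero_or_pos n with h0 | hpos
          · subst h0
            have h00 : (1:ℝ)/((0:ℕ):ℝ) = 0 := by norm_num
            rw [h00]
            exact mul_nonneg (by positivity) (ha 0)
          · have hnR : (0 : ℝ) < n := by exact_mod_cast hpos
            have hkpos : (0 : ℝ) < (k : ℝ) + 1 := by positivity
            have := hn
            simp only [hAdef, Set.mem_setOf_eq] at this
            rw [div_le_iff₀ hkpos] at this
            rw [div_le_iff₀ hnR]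
            linarith [this]
        · rw [Set.indicator_of_notMem hn]; exact zero_le
      have hs : Summable fun n => ((k : ℝ) + 1) * a n := hsum.mul_left _
      have hpos : ∀ n, 0 ≤ ((k : ℝ) + 1) * a n := fun n => mul_nonneg (by positivity) (ha n)
      have hcal : ∑' n, (A k).indicator F0 n ≤ ENNReal.ofReal (∑' n, ((k : ℝ) + 1) * a n) := by
        calc ∑' n, (A k).indicator F0 n ≤ ∑' n, ENNReal.ofReal (((k : ℝ) + 1) * a n) :=
              ENNReal.tsum_le_tsum hb
          _ = ENNReal.ofReal (∑' n, ((k : ℝ) + 1) * a n) :=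
              (ENNReal.ofReal_tsum_of_nonneg hpos hs).symm
      exact ne_top_of_le_ne_top ENNReal.ofReal_ne_top hcal
    -- choose tails
    have hN : ∀ k : ℕ, ∃ N : ℕ, ∑' n, ((A k) ∩ Set.Ici N).indicator F0 n < (2⁻¹ : ENNReal) ^ k := by
      intro k
      have htail := ENNReal.tendsto_sum_nat_add ((A k).indicator F0) (hAsum k)
      have hpos : (0 : ENNReal) < (2⁻¹ : ENNReal) ^ k := by
        apply ENNReal.pow_pos; norm_num
      have hev := htail.eventually (gt_mem_nhds hpos)
      obtain ⟨N, hNlt⟩ := hev.exists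
      refine ⟨N, lt_of_le_of_lt ?_ hNlt⟩
      -- ∑' over A k ∩ Ici N ≤ ∑' i, indicator (A k) F0 (i + N)
      have hinj : Function.Injective (fun i : ℕ => i + N) := fun a b h => by simpa using h
      have hsupp : Function.support (((Set.Ici N) ∩ (A k)).indicator F0) ⊆
          Set.range (fun i : ℕ => i + N) := by
        intro n hn
        have : n ∈ Set.Ici N ∩ A k := by
          by_contra hc
          exact hn (Set.indicator_of_notMem hc F0)
        exact ⟨n - N, by simpa using Nat.sub_add_cancel this.1⟩
      have heq := hinj.tsum_eq (f := ((Set.Ici N) ∩ (A k)).indicator F0) hsupp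
      rw [Set.inter_comm]
      rw [← heq]
      apply ENNReal.tsum_le_tsum
      intro i
      by_cases hi : (i + N) ∈ Set.Ici N ∩ A k
      · rw [Set.indicator_of_mem hi, Set.indicator_of_mem hi.2]
      · rw [Set.indicator_of_notMem hi]; exact zero_le
    choose N hNlt using hN
    set B : Set ℕ := ⋃ k, (A k ∩ Set.Ici (N k)) with hBdef
    have hBsum : ∑' n, B.indicator F0 n ≠ ⊤ := by
      have hle : ∀ n, B.indicator F0 n ≤ ∑' k, (A k ∩ Set.Ici (N k)).indicator F0 n := by
        intro n
        by_cases hn : n ∈ B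
        · rw [Set.indicator_of_mem hn]
          obtain ⟨k, hk⟩ := Set.mem_iUnion.mp hn
          calc F0 n = (A k ∩ Set.Ici (N k)).indicator F0 n := (Set.indicator_of_mem hk F0).symm
            _ ≤ _ := ENNReal.le_tsum k
        · rw [Set.indicator_of_notMem hn]; exact zero_le
      have h2 : ∑' n, B.indicator F0 n ≤ ∑' (k : ℕ), (2⁻¹ : ENNReal) ^ k := by
        calc ∑' n, B.indicator F0 n
            ≤ ∑' n, ∑' k, (A k ∩ Set.Ici (N k)).indicator F0 n := ENNReal.tsum_le_tsum hle
          _ = ∑' k, ∑' n, (A k ∩ Set.Ici (N k)).indicator F0 n := ENNReal.tsum_comm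
          _ ≤ ∑' (k : ℕ), (2⁻¹ : ENNReal) ^ k :=
              ENNReal.tsum_le_tsum (fun k => (hNlt k).le)
      have h3 : ∑' (k : ℕ), (2⁻¹ : ENNReal) ^ k ≠ ⊤ := by
        rw [ENNReal.tsum_geometric, ENNReal.one_sub_inv_two, inv_inv]
        exact ENNReal.ofNat_ne_top
      exact ne_top_of_le_ne_top h3 h2
    -- real summability of B's reciprocals
    have hBreal : Summable (B.indicator fun n : ℕ => 1 / (n : ℝ)) := by
      have := ENNReal.summable_toReal hBsum
      convert this using 2 with n
      by_cases hn : n ∈ B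
      · rw [Set.indicator_of_mem hn, Set.indicator_of_mem hn]
        rw [hF0, ENNReal.toReal_ofReal (by positivity)]
      · rw [Set.indicator_of_notMem hn, Set.indicator_of_notMem hn]
        simp
    have hBI : B ∈ I := h B hBreal
    refine ⟨Bᶜ, by rwa [compl_compl], ?_⟩
    intro ε hε
    obtain ⟨k, hk⟩ := exists_nat_one_div_lt hε
    refine ⟨N k, fun n hn hnN => ?_⟩
    have hlt : (n : ℝ) * a n < 1 / ((k : ℝ) + 1) := by
      by_contra hc
      push_neg at hc
      have hnA : n ∈ A k := hc
      have hnB : n ∈ B := Set.mem_iUnion.mpr ⟨k, ⟨hnA, hnN⟩⟩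
      exact hn hnB
    have habs : |(n : ℝ) * a n| = (n : ℝ) * a n :=
      abs_of_nonneg (mul_nonneg (Nat.cast_nonneg n) (ha n))
    rw [habs]
    exact lt_trans hlt hk
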